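/- Let Y₅ = (1/r)(x,σ₁×σ₂), Y₆ = (1/r)(x,σ₁), Y₇ = (1/r)(x,σ₂−σ₁). Then the following commutation relations hold: [Y₆, Y₅] = 2i(K − 1 + (Y₅)²/2) and [Y₇, Y₅] = −4i(K − 1 + (Y₅)²/2), where 1 denotes the identity operator. -/

import Mathlib

noncomputable section

open scoped BigOperators

/-- The spinor space `ℂ⁴ = ℂ² ⊗ ℂ²`, realized as functions on `Fin 2 × Fin 2`. -/
abbrev Spinor : Type := Fin 2 × Fin 2 → ℂ

/-- Wave functions on `ℝ³` (in the statements they are restricted to functions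
that are smooth away from the origin). -/
abbrev WaveFn : Type := (Fin 3 → ℝ) → Spinor

/-- Operators: `ℂ`-linear combinations and compositions are formed pointwise. -/
abbrev Op : Type := WaveFn → WaveFn

/-- The commutator `[A,B] = AB − BA`. -/
def opComm (A B : Op) : Op := fun ψ => A (B ψ) - B (A ψ)

/-- The identity operator. -/
def idOp : Op := fun ψ => ψ

/-- The Euclidean norm `r = |x|`. -/
def rfun (x : Fin 3 → ℝ) : ℝ := Real.sqrt (∑ k, x k ^ 2)

/-- Multiplication by a radial function `f(r)`. -/
def mulR (f : ℝ → ℝ) : Op := fun ψ x => (f (rfun x) : ℂ) • ψ x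

/-- The position operator `x_k` (multiplication by the k-th coordinate). -/
def xOp (k : Fin 3) : Op := fun ψ x => (x k : ℂ) • ψ x

/-- The momentum operator `p_k = -ihbar ∂/∂x_k`. -/
def pOp (hbar : ℝ) (k : Fin 3) : Op :=
  fun ψ x => (-(Complex.I * (hbar : ℂ))) • fderiv ℝ ψ x (Pi.single k 1)

/-- The Laplacian `Δ = Σ_k ∂²/∂x_k²`. -/
def lap : Op :=
  fun ψ x => ∑ k, fderiv ℝ (fun y => fderiv ℝ ψ y (Pi.single k 1)) x (Pi.single k 1)

/-- The totally antisymmetric Levi-Civita symbol `ε_{ijk}` on `Fin 3`. -/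
def eps (i j k : Fin 3) : ℂ :=
  ((j.1 : ℂ) - (i.1 : ℂ)) * ((k.1 : ℂ) - (i.1 : ℂ)) * ((k.1 : ℂ) - (j.1 : ℂ)) / 2

/-- The standard Pauli matrices `σ¹, σ², σ³`. -/
def pauli : Fin 3 → Matrix (Fin 2) (Fin 2) ℂ :=
  ![!![0, 1; 1, 0], !![0, -Complex.I; Complex.I, 0], !![1, 0; 0, -1]]

/-- `(σ₁)_k = σ^k ⊗ I₂`, acting on the first tensor factor. -/
def sigma1 (k : Fin 3) : Op := fun ψ x ab => ∑ j, pauli k ab.1 j * ψ x (j, ab.2)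

/-- `(σ₂)_k = I₂ ⊗ σ^k`, acting on the second tensor factor. -/
def sigma2 (k : Fin 3) : Op := fun ψ x ab => ∑ j, pauli k ab.2 j * ψ x (ab.1, j)

/-- Dot product of triples of operators: `(A,B) = Σ_k A_k B_k`. -/
def dot (A B : Fin 3 → Op) : Op := ∑ k, A k ∘ B k

/-- Cross product of triples of operators: `(A×B)_k = ε_{klm} A_l B_m`. -/
def cross (A B : Fin 3 → Op) (k : Fin 3) : Op := ∑ l, ∑ m, eps k l m • (A l ∘ B m)

/-- The angular momentum `L_k = ε_{klm} x_l p_m`. -/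
def LOp (hbar : ℝ) (k : Fin 3) : Op := ∑ l, ∑ m, eps k l m • (xOp l ∘ pOp hbar m)

/-- The spin-exchange operator `K = (σ₁,σ₂)`. -/
def KOp : Op := dot sigma1 sigma2

/-- `σ₁ + σ₂` componentwise. -/
def sigmaSum (k : Fin 3) : Op := sigma1 k + sigma2 k

/-- `σ₁ − σ₂` componentwise. -/
def sigmaDiff (k : Fin 3) : Op := sigma1 k - sigma2 k

/-- The general rotationally invariant two-spin Hamiltonian
`H = −(hbar²/2)Δ + V₀(r) + ½V₁(r)(σ₁+σ₂,L) + V₂(r)K + V₃(r)(x,σ₁)(x,σ₂)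
    + V₄(r)(σ₁,p)(σ₂,p) + ½V₅(r)[(σ₁,L)(σ₂,L)+(σ₂,L)(σ₁,L)]`. -/
def Ham (hbar : ℝ) (V₀ V₁ V₂ V₃ V₄ V₅ : ℝ → ℝ) : Op :=
  (-(hbar ^ 2 / 2) : ℂ) • lap + mulR V₀
    + ((1 : ℂ)/2) • (mulR V₁ ∘ dot sigmaSum (LOp hbar))
    + mulR V₂ ∘ KOp
    + mulR V₃ ∘ (dot xOp sigma1 ∘ dot xOp sigma2)
    + mulR V₄ ∘ (dot sigma1 (pOp hbar) ∘ dot sigma2 (pOp hbar))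
    + ((1 : ℂ)/2) • (mulR V₅ ∘ (dot sigma1 (LOp hbar) ∘ dot sigma2 (LOp hbar)
        + dot sigma2 (LOp hbar) ∘ dot sigma1 (LOp hbar)))



section Aux

lemma op_sum_apply3 (F : Fin 3 → Op) (ψ : WaveFn) (x : Fin 3 → ℝ)
    (ab : Fin 2 × Fin 2) : (∑ k, F k) ψ x ab = ∑ k, F k ψ x ab := by
  simp [Finset.sum_apply]

lemma dotOp_apply (A B : Fin 3 → Op) (ψ : WaveFn) (x : Fin 3 → ℝ)
    (ab : Fin 2 × Fin 2) : dot A B ψ x ab = ∑ k, A k (B k ψ) x ab := by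
  simp [dot, Finset.sum_apply]

lemma crossOp_apply (A B : Fin 3 → Op) (k : Fin 3) (ψ : WaveFn) (x : Fin 3 → ℝ)
    (ab : Fin 2 × Fin 2) :
    cross A B k ψ x ab = ∑ l, ∑ m, eps k l m * A l (B m ψ) x ab := by
  simp [cross, Finset.sum_apply, Pi.smul_apply]

lemma mulROp_apply (f : ℝ → ℝ) (ψ : WaveFn) (x : Fin 3 → ℝ) (ab : Fin 2 × Fin 2) :
    mulR f ψ x ab = (f (rfun x) : ℂ) * ψ x ab := rfl

lemma xOp_apply' (k : Fin 3) (ψ : WaveFn) (x : Fin 3 → ℝ) (ab : Fin 2 × Fin 2) :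
    xOp k ψ x ab = (x k : ℂ) * ψ x ab := rfl

lemma sigma1_apply' (k : Fin 3) (ψ : WaveFn) (x : Fin 3 → ℝ) (ab : Fin 2 × Fin 2) :
    sigma1 k ψ x ab = ∑ j, pauli k ab.1 j * ψ x (j, ab.2) := rfl

lemma sigma2_apply' (k : Fin 3) (ψ : WaveFn) (x : Fin 3 → ℝ) (ab : Fin 2 × Fin 2) :
    sigma2 k ψ x ab = ∑ j, pauli k ab.2 j * ψ x (ab.1, j) := rfl

end Aux

/-- `Y₅ = (1/r)(x,σ₁×σ₂)`. -/
def Y5 : Op := mulR (fun r => 1 / r) ∘ dot xOp (cross sigma1 sigma2)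

/-- `Y₆ = (1/r)(x,σ₁)`. -/
def Y6 : Op := mulR (fun r => 1 / r) ∘ dot xOp sigma1

/-- `Y₇ = (1/r)(x,σ₂−σ₁)`. -/
def Y7 : Op := mulR (fun r => 1 / r) ∘ dot xOp (fun k => sigma2 k - sigma1 k)


lemma Y5app00 (φ : WaveFn) (x : Fin 3 → ℝ) :
    Y5 φ x ((0 : Fin 2), (0 : Fin 2)) = ((rfun x : ℝ) : ℂ)⁻¹ * ((Complex.I*(x 0) + (x 1)) * φ x ((0:Fin 2),(1:Fin 2)) + (-Complex.I*(x 0) - (x 1)) * φ x ((1:Fin 2),(0:Fin 2))) := by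
  simp only [Y5, Y6, Y7, KOp, Function.comp_apply, mulROp_apply, dotOp_apply,
    crossOp_apply, xOp_apply', sigma1_apply', sigma2_apply', Fin.sum_univ_three,
    Fin.sum_univ_two, eps, pauli, Matrix.cons_val_zero, Matrix.cons_val_one,
    Matrix.head_cons, Matrix.cons_val_two, Matrix.tail_cons, Matrix.cons_val',
    Matrix.cons_val_fin_one, Matrix.empty_val', Matrix.head_fin_const,
    Matrix.of_apply, Fin.isValue, one_div, Pi.sub_apply, Fin.val_zero, Fin.val_one, Fin.val_two,
    Nat.cast_zero, Nat.cast_one, Nat.cast_ofNat]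
  push_cast
  ring_nf
  all_goals simp only [Complex.I_sq]
  all_goals ring

lemma Y5app01 (φ : WaveFn) (x : Fin 3 → ℝ) :
    Y5 φ x ((0 : Fin 2), (1 : Fin 2)) = ((rfun x : ℝ) : ℂ)⁻¹ * ((-Complex.I*(x 0) + (x 1)) * φ x ((0:Fin 2),(0:Fin 2)) + 2*Complex.I*(x 2) * φ x ((1:Fin 2),(0:Fin 2)) + (Complex.I*(x 0) + (x 1)) * φ x ((1:Fin 2),(1:Fin 2))) := by
  simp only [Y5, Y6, Y7, KOp, Function.comp_apply, mulROp_apply, dotOp_apply,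
    crossOp_apply, xOp_apply', sigma1_apply', sigma2_apply', Fin.sum_univ_three,
    Fin.sum_univ_two, eps, pauli, Matrix.cons_val_zero, Matrix.cons_val_one,
    Matrix.head_cons, Matrix.cons_val_two, Matrix.tail_cons, Matrix.cons_val',
    Matrix.cons_val_fin_one, Matrix.empty_val', Matrix.head_fin_const,
    Matrix.of_apply, Fin.isValue, one_div, Pi.sub_apply, Fin.val_zero, Fin.val_one, Fin.val_two,
    Nat.cast_zero, Nat.cast_one, Nat.cast_ofNat]
  push_cast
  ring_nf
  all_goals simp only [Complex.I_sq]
  all_goals ring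

lemma Y5app10 (φ : WaveFn) (x : Fin 3 → ℝ) :
    Y5 φ x ((1 : Fin 2), (0 : Fin 2)) = ((rfun x : ℝ) : ℂ)⁻¹ * ((Complex.I*(x 0) - (x 1)) * φ x ((0:Fin 2),(0:Fin 2)) - 2*Complex.I*(x 2) * φ x ((0:Fin 2),(1:Fin 2)) + (-Complex.I*(x 0) - (x 1)) * φ x ((1:Fin 2),(1:Fin 2))) := by
  simp only [Y5, Y6, Y7, KOp, Function.comp_apply, mulROp_apply, dotOp_apply,
    crossOp_apply, xOp_apply', sigma1_apply', sigma2_apply', Fin.sum_univ_three,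
    Fin.sum_univ_two, eps, pauli, Matrix.cons_val_zero, Matrix.cons_val_one,
    Matrix.head_cons, Matrix.cons_val_two, Matrix.tail_cons, Matrix.cons_val',
    Matrix.cons_val_fin_one, Matrix.empty_val', Matrix.head_fin_const,
    Matrix.of_apply, Fin.isValue, one_div, Pi.sub_apply, Fin.val_zero, Fin.val_one, Fin.val_two,
    Nat.cast_zero, Nat.cast_one, Nat.cast_ofNat]
  push_cast
  ring_nf
  all_goals simp only [Complex.I_sq]
  all_goals ring

lemma Y5app11 (φ : WaveFn) (x : Fin 3 → ℝ) :
    Y5 φ x ((1 : Fin 2), (1 : Fin 2)) = ((rfun x : ℝ) : ℂ)⁻¹ * ((-Complex.I*(x 0) + (x 1)) * φ x ((0:Fin 2),(1:Fin 2)) + (Complex.I*(x 0) - (x 1)) * φ x ((1:Fin 2),(0:Fin 2))) := by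
  simp only [Y5, Y6, Y7, KOp, Function.comp_apply, mulROp_apply, dotOp_apply,
    crossOp_apply, xOp_apply', sigma1_apply', sigma2_apply', Fin.sum_univ_three,
    Fin.sum_univ_two, eps, pauli, Matrix.cons_val_zero, Matrix.cons_val_one,
    Matrix.head_cons, Matrix.cons_val_two, Matrix.tail_cons, Matrix.cons_val',
    Matrix.cons_val_fin_one, Matrix.empty_val', Matrix.head_fin_const,
    Matrix.of_apply, Fin.isValue, one_div, Pi.sub_apply, Fin.val_zero, Fin.val_one, Fin.val_two,
    Nat.cast_zero, Nat.cast_one, Nat.cast_ofNat]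
  push_cast
  ring_nf
  all_goals simp only [Complex.I_sq]
  all_goals ring

lemma Y6app00 (φ : WaveFn) (x : Fin 3 → ℝ) :
    Y6 φ x ((0 : Fin 2), (0 : Fin 2)) = ((rfun x : ℝ) : ℂ)⁻¹ * ((x 2) * φ x ((0:Fin 2),(0:Fin 2)) + ((x 0) - Complex.I*(x 1)) * φ x ((1:Fin 2),(0:Fin 2))) := by
  simp only [Y5, Y6, Y7, KOp, Function.comp_apply, mulROp_apply, dotOp_apply,
    crossOp_apply, xOp_apply', sigma1_apply', sigma2_apply', Fin.sum_univ_three,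
    Fin.sum_univ_two, eps, pauli, Matrix.cons_val_zero, Matrix.cons_val_one,
    Matrix.head_cons, Matrix.cons_val_two, Matrix.tail_cons, Matrix.cons_val',
    Matrix.cons_val_fin_one, Matrix.empty_val', Matrix.head_fin_const,
    Matrix.of_apply, Fin.isValue, one_div, Pi.sub_apply, Fin.val_zero, Fin.val_one, Fin.val_two,
    Nat.cast_zero, Nat.cast_one, Nat.cast_ofNat]
  push_cast
  ring_nf
  all_goals simp only [Complex.I_sq]
  all_goals ring

lemma Y6app01 (φ : WaveFn) (x : Fin 3 → ℝ) :
    Y6 φ x ((0 : Fin 2), (1 : Fin 2)) = ((rfun x : ℝ) : ℂ)⁻¹ * ((x 2) * φ x ((0:Fin 2),(1:Fin 2)) + ((x 0) - Complex.I*(x 1)) * φ x ((1:Fin 2),(1:Fin 2))) := by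
  simp only [Y5, Y6, Y7, KOp, Function.comp_apply, mulROp_apply, dotOp_apply,
    crossOp_apply, xOp_apply', sigma1_apply', sigma2_apply', Fin.sum_univ_three,
    Fin.sum_univ_two, eps, pauli, Matrix.cons_val_zero, Matrix.cons_val_one,
    Matrix.head_cons, Matrix.cons_val_two, Matrix.tail_cons, Matrix.cons_val',
    Matrix.cons_val_fin_one, Matrix.empty_val', Matrix.head_fin_const,
    Matrix.of_apply, Fin.isValue, one_div, Pi.sub_apply, Fin.val_zero, Fin.val_one, Fin.val_two,
    Nat.cast_zero, Nat.cast_one, Nat.cast_ofNat]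
  push_cast
  ring_nf
  all_goals simp only [Complex.I_sq]
  all_goals ring

lemma Y6app10 (φ : WaveFn) (x : Fin 3 → ℝ) :
    Y6 φ x ((1 : Fin 2), (0 : Fin 2)) = ((rfun x : ℝ) : ℂ)⁻¹ * (((x 0) + Complex.I*(x 1)) * φ x ((0:Fin 2),(0:Fin 2)) - (x 2) * φ x ((1:Fin 2),(0:Fin 2))) := by
  simp only [Y5, Y6, Y7, KOp, Function.comp_apply, mulROp_apply, dotOp_apply,
    crossOp_apply, xOp_apply', sigma1_apply', sigma2_apply', Fin.sum_univ_three,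
    Fin.sum_univ_two, eps, pauli, Matrix.cons_val_zero, Matrix.cons_val_one,
    Matrix.head_cons, Matrix.cons_val_two, Matrix.tail_cons, Matrix.cons_val',
    Matrix.cons_val_fin_one, Matrix.empty_val', Matrix.head_fin_const,
    Matrix.of_apply, Fin.isValue, one_div, Pi.sub_apply, Fin.val_zero, Fin.val_one, Fin.val_two,
    Nat.cast_zero, Nat.cast_one, Nat.cast_ofNat]
  push_cast
  ring_nf
  all_goals simp only [Complex.I_sq]
  all_goals ring

lemma Y6app11 (φ : WaveFn) (x : Fin 3 → ℝ) :
    Y6 φ x ((1 : Fin 2), (1 : Fin 2)) = ((rfun x : ℝ) : ℂ)⁻¹ * (((x 0) + Complex.I*(x 1)) * φ x ((0:Fin 2),(1:Fin 2)) - (x 2) * φ x ((1:Fin 2),(1:Fin 2))) := by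
  simp only [Y5, Y6, Y7, KOp, Function.comp_apply, mulROp_apply, dotOp_apply,
    crossOp_apply, xOp_apply', sigma1_apply', sigma2_apply', Fin.sum_univ_three,
    Fin.sum_univ_two, eps, pauli, Matrix.cons_val_zero, Matrix.cons_val_one,
    Matrix.head_cons, Matrix.cons_val_two, Matrix.tail_cons, Matrix.cons_val',
    Matrix.cons_val_fin_one, Matrix.empty_val', Matrix.head_fin_const,
    Matrix.of_apply, Fin.isValue, one_div, Pi.sub_apply, Fin.val_zero, Fin.val_one, Fin.val_two,
    Nat.cast_zero, Nat.cast_one, Nat.cast_ofNat]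
  push_cast
  ring_nf
  all_goals simp only [Complex.I_sq]
  all_goals ring

lemma Y7app00 (φ : WaveFn) (x : Fin 3 → ℝ) :
    Y7 φ x ((0 : Fin 2), (0 : Fin 2)) = ((rfun x : ℝ) : ℂ)⁻¹ * (((x 0) - Complex.I*(x 1)) * φ x ((0:Fin 2),(1:Fin 2)) + (-(x 0) + Complex.I*(x 1)) * φ x ((1:Fin 2),(0:Fin 2))) := by
  simp only [Y5, Y6, Y7, KOp, Function.comp_apply, mulROp_apply, dotOp_apply,
    crossOp_apply, xOp_apply', sigma1_apply', sigma2_apply', Fin.sum_univ_three,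
    Fin.sum_univ_two, eps, pauli, Matrix.cons_val_zero, Matrix.cons_val_one,
    Matrix.head_cons, Matrix.cons_val_two, Matrix.tail_cons, Matrix.cons_val',
    Matrix.cons_val_fin_one, Matrix.empty_val', Matrix.head_fin_const,
    Matrix.of_apply, Fin.isValue, one_div, Pi.sub_apply, Fin.val_zero, Fin.val_one, Fin.val_two,
    Nat.cast_zero, Nat.cast_one, Nat.cast_ofNat]
  push_cast
  ring_nf
  all_goals simp only [Complex.I_sq]
  all_goals ring

lemma Y7app01 (φ : WaveFn) (x : Fin 3 → ℝ) :
    Y7 φ x ((0 : Fin 2), (1 : Fin 2)) = ((rfun x : ℝ) : ℂ)⁻¹ * (((x 0) + Complex.I*(x 1)) * φ x ((0:Fin 2),(0:Fin 2)) - 2*(x 2) * φ x ((0:Fin 2),(1:Fin 2)) + (-(x 0) + Complex.I*(x 1)) * φ x ((1:Fin 2),(1:Fin 2))) := by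
  simp only [Y5, Y6, Y7, KOp, Function.comp_apply, mulROp_apply, dotOp_apply,
    crossOp_apply, xOp_apply', sigma1_apply', sigma2_apply', Fin.sum_univ_three,
    Fin.sum_univ_two, eps, pauli, Matrix.cons_val_zero, Matrix.cons_val_one,
    Matrix.head_cons, Matrix.cons_val_two, Matrix.tail_cons, Matrix.cons_val',
    Matrix.cons_val_fin_one, Matrix.empty_val', Matrix.head_fin_const,
    Matrix.of_apply, Fin.isValue, one_div, Pi.sub_apply, Fin.val_zero, Fin.val_one, Fin.val_two,
    Nat.cast_zero, Nat.cast_one, Nat.cast_ofNat]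
  push_cast
  ring_nf
  all_goals simp only [Complex.I_sq]
  all_goals ring

lemma Y7app10 (φ : WaveFn) (x : Fin 3 → ℝ) :
    Y7 φ x ((1 : Fin 2), (0 : Fin 2)) = ((rfun x : ℝ) : ℂ)⁻¹ * ((-(x 0) - Complex.I*(x 1)) * φ x ((0:Fin 2),(0:Fin 2)) + 2*(x 2) * φ x ((1:Fin 2),(0:Fin 2)) + ((x 0) - Complex.I*(x 1)) * φ x ((1:Fin 2),(1:Fin 2))) := by
  simp only [Y5, Y6, Y7, KOp, Function.comp_apply, mulROp_apply, dotOp_apply,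
    crossOp_apply, xOp_apply', sigma1_apply', sigma2_apply', Fin.sum_univ_three,
    Fin.sum_univ_two, eps, pauli, Matrix.cons_val_zero, Matrix.cons_val_one,
    Matrix.head_cons, Matrix.cons_val_two, Matrix.tail_cons, Matrix.cons_val',
    Matrix.cons_val_fin_one, Matrix.empty_val', Matrix.head_fin_const,
    Matrix.of_apply, Fin.isValue, one_div, Pi.sub_apply, Fin.val_zero, Fin.val_one, Fin.val_two,
    Nat.cast_zero, Nat.cast_one, Nat.cast_ofNat]
  push_cast
  ring_nf
  all_goals simp only [Complex.I_sq]
  all_goals ring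

lemma Y7app11 (φ : WaveFn) (x : Fin 3 → ℝ) :
    Y7 φ x ((1 : Fin 2), (1 : Fin 2)) = ((rfun x : ℝ) : ℂ)⁻¹ * ((-(x 0) - Complex.I*(x 1)) * φ x ((0:Fin 2),(1:Fin 2)) + ((x 0) + Complex.I*(x 1)) * φ x ((1:Fin 2),(0:Fin 2))) := by
  simp only [Y5, Y6, Y7, KOp, Function.comp_apply, mulROp_apply, dotOp_apply,
    crossOp_apply, xOp_apply', sigma1_apply', sigma2_apply', Fin.sum_univ_three,
    Fin.sum_univ_two, eps, pauli, Matrix.cons_val_zero, Matrix.cons_val_one,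
    Matrix.head_cons, Matrix.cons_val_two, Matrix.tail_cons, Matrix.cons_val',
    Matrix.cons_val_fin_one, Matrix.empty_val', Matrix.head_fin_const,
    Matrix.of_apply, Fin.isValue, one_div, Pi.sub_apply, Fin.val_zero, Fin.val_one, Fin.val_two,
    Nat.cast_zero, Nat.cast_one, Nat.cast_ofNat]
  push_cast
  ring_nf
  all_goals simp only [Complex.I_sq]
  all_goals ring

lemma Kapp00 (φ : WaveFn) (x : Fin 3 → ℝ) :
    KOp φ x ((0 : Fin 2), (0 : Fin 2)) = φ x ((0:Fin 2),(0:Fin 2)) := by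
  simp only [Y5, Y6, Y7, KOp, Function.comp_apply, mulROp_apply, dotOp_apply,
    crossOp_apply, xOp_apply', sigma1_apply', sigma2_apply', Fin.sum_univ_three,
    Fin.sum_univ_two, eps, pauli, Matrix.cons_val_zero, Matrix.cons_val_one,
    Matrix.head_cons, Matrix.cons_val_two, Matrix.tail_cons, Matrix.cons_val',
    Matrix.cons_val_fin_one, Matrix.empty_val', Matrix.head_fin_const,
    Matrix.of_apply, Fin.isValue, one_div, Pi.sub_apply, Fin.val_zero, Fin.val_one, Fin.val_two,
    Nat.cast_zero, Nat.cast_one, Nat.cast_ofNat]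
  push_cast
  ring_nf
  all_goals simp only [Complex.I_sq]
  all_goals ring

lemma Kapp01 (φ : WaveFn) (x : Fin 3 → ℝ) :
    KOp φ x ((0 : Fin 2), (1 : Fin 2)) = -φ x ((0:Fin 2),(1:Fin 2)) + 2*φ x ((1:Fin 2),(0:Fin 2)) := by
  simp only [Y5, Y6, Y7, KOp, Function.comp_apply, mulROp_apply, dotOp_apply,
    crossOp_apply, xOp_apply', sigma1_apply', sigma2_apply', Fin.sum_univ_three,
    Fin.sum_univ_two, eps, pauli, Matrix.cons_val_zero, Matrix.cons_val_one,
    Matrix.head_cons, Matrix.cons_val_two, Matrix.tail_cons, Matrix.cons_val',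
    Matrix.cons_val_fin_one, Matrix.empty_val', Matrix.head_fin_const,
    Matrix.of_apply, Fin.isValue, one_div, Pi.sub_apply, Fin.val_zero, Fin.val_one, Fin.val_two,
    Nat.cast_zero, Nat.cast_one, Nat.cast_ofNat]
  push_cast
  ring_nf
  all_goals simp only [Complex.I_sq]
  all_goals ring

lemma Kapp10 (φ : WaveFn) (x : Fin 3 → ℝ) :
    KOp φ x ((1 : Fin 2), (0 : Fin 2)) = 2*φ x ((0:Fin 2),(1:Fin 2)) - φ x ((1:Fin 2),(0:Fin 2)) := by
  simp only [Y5, Y6, Y7, KOp, Function.comp_apply, mulROp_apply, dotOp_apply,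
    crossOp_apply, xOp_apply', sigma1_apply', sigma2_apply', Fin.sum_univ_three,
    Fin.sum_univ_two, eps, pauli, Matrix.cons_val_zero, Matrix.cons_val_one,
    Matrix.head_cons, Matrix.cons_val_two, Matrix.tail_cons, Matrix.cons_val',
    Matrix.cons_val_fin_one, Matrix.empty_val', Matrix.head_fin_const,
    Matrix.of_apply, Fin.isValue, one_div, Pi.sub_apply, Fin.val_zero, Fin.val_one, Fin.val_two,
    Nat.cast_zero, Nat.cast_one, Nat.cast_ofNat]
  push_cast
  ring_nf
  all_goals simp only [Complex.I_sq]
  all_goals ring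

lemma Kapp11 (φ : WaveFn) (x : Fin 3 → ℝ) :
    KOp φ x ((1 : Fin 2), (1 : Fin 2)) = φ x ((1:Fin 2),(1:Fin 2)) := by
  simp only [Y5, Y6, Y7, KOp, Function.comp_apply, mulROp_apply, dotOp_apply,
    crossOp_apply, xOp_apply', sigma1_apply', sigma2_apply', Fin.sum_univ_three,
    Fin.sum_univ_two, eps, pauli, Matrix.cons_val_zero, Matrix.cons_val_one,
    Matrix.head_cons, Matrix.cons_val_two, Matrix.tail_cons, Matrix.cons_val',
    Matrix.cons_val_fin_one, Matrix.empty_val', Matrix.head_fin_const,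
    Matrix.of_apply, Fin.isValue, one_div, Pi.sub_apply, Fin.val_zero, Fin.val_one, Fin.val_two,
    Nat.cast_zero, Nat.cast_one, Nat.cast_ofNat]
  push_cast
  ring_nf
  all_goals simp only [Complex.I_sq]
  all_goals ring

set_option maxHeartbeats 1600000 in
/-- `[Y₆,Y₅] = 2i(K − 1 + Y₅²/2)` and `[Y₇,Y₅] = −4i(K − 1 + Y₅²/2)`. -/
theorem statement15
    (ψ : WaveFn) (hψ : ContDiffOn ℝ (⊤ : ℕ∞) ψ {x : Fin 3 → ℝ | x ≠ 0})
    (x : Fin 3 → ℝ) (hx : x ≠ 0) :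
    opComm Y6 Y5 ψ x
      = ((2 * Complex.I) • (KOp - idOp + ((1 : ℂ)/2) • (Y5 ∘ Y5))) ψ x
    ∧ opComm Y7 Y5 ψ x
      = ((-(4 * Complex.I)) • (KOp - idOp + ((1 : ℂ)/2) • (Y5 ∘ Y5))) ψ x := by
  have hsum : 0 < ∑ k, x k ^ 2 := by
    rcases Function.ne_iff.mp hx with ⟨k, hk⟩
    have hk' : x k ≠ 0 := by simpa using hk
    have h1 : 0 < x k ^ 2 := by positivity
    exact lt_of_lt_of_le h1 (Finset.single_le_sum (fun i _ => sq_nonneg (x i)) (Finset.mem_univ k))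
  have hr : rfun x ≠ 0 := (Real.sqrt_pos.mpr hsum).ne'
  have hrc : ((rfun x : ℝ) : ℂ) ≠ 0 := by exact_mod_cast hr
  have hr2 : ((rfun x : ℝ) : ℂ) ^ 2 = (x 0 : ℂ)^2 + (x 1 : ℂ)^2 + (x 2 : ℂ)^2 := by
    have h : rfun x ^ 2 = ∑ k, x k ^ 2 := Real.sq_sqrt hsum.le
    rw [Fin.sum_univ_three] at h
    exact_mod_cast h
  have hr4 : ((rfun x : ℝ) : ℂ) ^ 4 = ((x 0 : ℂ)^2 + (x 1 : ℂ)^2 + (x 2 : ℂ)^2) ^ 2 := by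
    rw [show (4:ℕ) = 2*2 from rfl, pow_mul, hr2]
  have hI3 : Complex.I ^ 3 = -Complex.I := by
    rw [pow_succ, Complex.I_sq]; ring
  have hI4 : Complex.I ^ 4 = 1 := by
    rw [show (4:ℕ) = 2*2 from rfl, pow_mul, Complex.I_sq]; ring
  constructor <;>
  · funext ab
    obtain ⟨a, b⟩ := ab
    fin_cases a <;> fin_cases b <;>
    · simp only [Fin.mk_zero, Fin.mk_one]
      simp only [opComm, idOp, Function.comp_apply, Pi.add_apply, Pi.sub_apply,
        Pi.smul_apply, smul_eq_mul, Y5app00, Y5app01, Y5app10, Y5app11,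
        Y6app00, Y6app01, Y6app10, Y6app11, Y7app00, Y7app01, Y7app10, Y7app11,
        Kapp00, Kapp01, Kapp10, Kapp11]
      field_simp
      ring_nf
      simp only [Complex.I_sq, Prod.mk_zero_zero, Prod.mk_one_one]
      simp -failIfUnchanged only [hr4, hr2]
      ring_nf
      all_goals simp only [Complex.I_sq, hI3, hI4, Prod.mk_zero_zero, Prod.mk_one_one]
      all_goals ring
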